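/- Let $\Sigma$ be an $n \times n$ real matrix with strictly positive diagonal entries, let $\sigma \in \mathbb{R}^n$ with $\sigma_i = \sqrt{\Sigma_{ii}}$, let $\mu, \zeta \in \mathbb{R}^n$ be arbitrary vectors, and define $R = \mathrm{diag}(\sigma)^{-1} \Sigma\, \mathrm{diag}(\sigma)^{-1}$. Let $D$ be the $n \times 2n$ matrix $D = \mathrm{diag}(1/\sigma^2)\,\big[\mathrm{diag}(\sigma + \mu \odot \zeta) \;\big|\; \mathrm{diag}(-\zeta/2)\big]$ and let $\Omega$ be the $2n \times 2n$ block matrix $\Omega = \begin{pmatrix} \Sigma & 2\Sigma\,\mathrm{diag}(\mu) \\ 2\,\mathrm{diag}(\mu)\Sigma & 2\,\Sigma \odot \Sigma + 4\,\mathrm{diag}(\mu)\Sigma\,\mathrm{diag}(\mu) \end{pmatrix}$. Then $D\, \Omega\, D^\top = R + \tfrac{1}{2}\, \mathrm{diag}(\zeta)\,(R \odot R)\,\mathrm{diag}(\zeta)$. -/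

import Mathlib

open Matrix

/-- The delta-method covariance of the vector of Sharpe ratios: multiplying the
`n × 2n` derivative matrix `D` against the `2n × 2n` moment covariance `Ω` gives
`R + ½ diag(ζ) (R ⊙ R) diag(ζ)`, where `R` is the correlation matrix. -/
theorem stmt_7 (n : ℕ) (S : Matrix (Fin n) (Fin n) ℝ) (hdiag : ∀ i, 0 < S i i)
    (σ : Fin n → ℝ) (hσ : ∀ i, σ i = Real.sqrt (S i i))
    (μ ζ : Fin n → ℝ)
    (R : Matrix (Fin n) (Fin n) ℝ)
    (hR : R = Matrix.diagonal (fun i => (σ i)⁻¹) * S * Matrix.diagonal (fun i => (σ i)⁻¹))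
    (D : Matrix (Fin n) (Fin n ⊕ Fin n) ℝ)
    (hD : D = Matrix.diagonal (fun i => 1 / (σ i) ^ 2) *
      Matrix.fromCols (Matrix.diagonal (fun i => σ i + μ i * ζ i))
        (Matrix.diagonal (fun i => -(ζ i) / 2)))
    (Ω : Matrix (Fin n ⊕ Fin n) (Fin n ⊕ Fin n) ℝ)
    (hΩ : Ω = Matrix.fromBlocks S ((2 : ℝ) • (S * Matrix.diagonal μ))
      ((2 : ℝ) • (Matrix.diagonal μ * S))
      ((2 : ℝ) • (Matrix.hadamard S S) +
        (4 : ℝ) • (Matrix.diagonal μ * S * Matrix.diagonal μ))) :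
    D * Ω * Dᵀ = R + (1 / 2 : ℝ) •
      (Matrix.diagonal ζ * Matrix.hadamard R R * Matrix.diagonal ζ) := by
  have hne : ∀ i, σ i ≠ 0 := fun i => by
    rw [hσ i]; exact ne_of_gt (Real.sqrt_pos.mpr (hdiag i))
  subst hR hD hΩ
  ext i j
  simp [Matrix.mul_apply, Matrix.fromCols, Matrix.fromBlocks, Matrix.diagonal, Matrix.hadamard,
    Finset.mul_sum, Finset.sum_mul, Fintype.sum_sum_type, ite_and, Finset.sum_ite_eq, Finset.sum_ite_eq',
    mul_ite, ite_mul]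
  have hi := hne i
  have hj := hne j
  field_simp
  ring
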